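/- Let the interference graph be complete on n links and let ρ ∈ (0,1). For the complete graph, Λ = {ν ≥ 0 : Σ_{j=1}^n ν_j ≤ 1}. For any ν ∈ ρΛ (so Σ_j ν_j ≤ ρ), there exist fugacities λ_1,…,λ_n > 0 such that the stationary service rates satisfy s_i(λ) = λ_i/(1+Σ_j λ_j) = ν_i + (1−ρ)/(2n) > ν_i for every i, and λ_max := max_i λ_i ≤ (1+ρ)/(1−ρ); consequently the complete-graph parallel Glauber dynamics with these fugacities (decision schedule {i} with probability c_n/n, c_n = (1−1/n)^{n−1}, empty otherwise) has mixing time T_mix ≤ 2n/(c_min(1−ρ)) = O(n), where c_min = 0.2. -/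

import Mathlib

open Finset

/-- Distribution at time `t` of a Markov chain with transition matrix `P`
started at state `x`. -/
noncomputable def chainDist {S : Type*} [Fintype S] [DecidableEq S]
    (P : S → S → ℝ) (x : S) : ℕ → S → ℝ
  | 0 => fun s => if s = x then 1 else 0
  | t + 1 => fun s => ∑ s' : S, chainDist P x t s' * P s' s

/-- Total variation distance between two distributions on a finite set. -/
noncomputable def tvDist {S : Type*} [Fintype S] (μ ν : S → ℝ) : ℝ :=
  (1 / 2) * ∑ s : S, |μ s - ν s|

/-- Mixing time: the maximum over starting states in `states` of the first time
the distribution is within `1/e` of `π` in total variation. -/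
noncomputable def mixTime {S : Type*} [Fintype S] [DecidableEq S]
    (P : S → S → ℝ) (π : S → ℝ) (states : Finset S) : ℕ :=
  states.sup fun x => sInf {t : ℕ | tvDist (chainDist P x t) π ≤ 1 / Real.exp 1}

/-- `c_n = (1 - 1/n)^(n-1)`: the probability that a given link is alone in the
decision schedule when every link sends an INTENT message with probability `1/n`. -/
noncomputable def cSel (n : ℕ) : ℝ := (1 - 1 / (n : ℝ)) ^ (n - 1)

/-- The transition matrix of the parallel Glauber dynamics on a complete
interference graph with `n` links: the state `none` means no link is active and
`some i` means only link `i` is active; each singleton decision schedule `{i}`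
is chosen with probability `c_n/n` and the empty decision schedule otherwise. -/
noncomputable def completeP (n : ℕ) (lam : Fin n → ℝ) :
    Option (Fin n) → Option (Fin n) → ℝ
  | none, none => 1 - cSel n + (cSel n / n) * ∑ i : Fin n, 1 / (1 + lam i)
  | none, some i => (cSel n / n) * (lam i / (1 + lam i))
  | some i, none => (cSel n / n) * (1 / (1 + lam i))
  | some i, some j => if i = j then 1 - (cSel n / n) * (1 / (1 + lam i)) else 0

/-- The stationary distribution of the complete-graph dynamics:
`π(i) = λ_i/Z`, `π(0) = 1/Z`, `Z = 1 + Σ_j λ_j`. -/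
noncomputable def completePi (n : ℕ) (lam : Fin n → ℝ) : Option (Fin n) → ℝ
  | none => 1 / (1 + ∑ j : Fin n, lam j)
  | some i => lam i / (1 + ∑ j : Fin n, lam j)

lemma contract_step {S : Type*} [Fintype S] [DecidableEq S]
    (P : S → S → ℝ) (π μ : S → ℝ) (z : S) (β : ℝ)
    (hP0 : ∀ x y, 0 ≤ P x y) (hrow : ∀ x, ∑ y : S, P x y = 1)
    (hβ : ∀ x, β ≤ P x z)
    (hsum : ∑ x : S, μ x = ∑ x : S, π x) :
    ∑ y : S, |∑ x : S, μ x * P x y - ∑ x : S, π x * P x y|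
      ≤ (1 - β) * ∑ x : S, |μ x - π x| := by
  have key : ∀ y, ∑ x : S, μ x * P x y - ∑ x : S, π x * P x y
      = ∑ x : S, (μ x - π x) * (P x y - if y = z then β else 0) := by
    intro y
    have expand : ∀ x : S, (μ x - π x) * (P x y - if y = z then β else 0)
        = μ x * P x y - π x * P x y
          - μ x * (if y = z then β else 0) + π x * (if y = z then β else 0) := by
      intro x; ring
    rw [Finset.sum_congr rfl fun x _ => expand x]
    rw [Finset.sum_add_distrib, Finset.sum_sub_distrib, Finset.sum_sub_distrib,
      ← Finset.sum_mul, ← Finset.sum_mul, hsum]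
    ring
  have hQ : ∀ x y : S, 0 ≤ P x y - if y = z then β else 0 := by
    intro x y
    by_cases h : y = z
    · subst h; simp only [if_true, eq_self_iff_true, sub_nonneg, ite_true]
      simpa using hβ x
    · simp only [if_neg h, sub_zero]; exact hP0 x y
  calc ∑ y : S, |∑ x : S, μ x * P x y - ∑ x : S, π x * P x y|
      ≤ ∑ y : S, ∑ x : S, |μ x - π x| * (P x y - if y = z then β else 0) := by
        refine Finset.sum_le_sum fun y _ => ?_
        rw [key y]
        refine (Finset.abs_sum_le_sum_abs _ _).trans (Finset.sum_le_sum fun x _ => ?_)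
        rw [abs_mul, abs_of_nonneg (hQ x y)]
    _ = ∑ x : S, |μ x - π x| * ∑ y : S, (P x y - if y = z then β else 0) := by
        rw [Finset.sum_comm]
        exact Finset.sum_congr rfl fun x _ => (Finset.mul_sum _ _ _).symm
    _ = (1 - β) * ∑ x : S, |μ x - π x| := by
        have hin : ∀ x : S, ∑ y : S, (P x y - if y = z then β else 0) = 1 - β := by
          intro x
          rw [Finset.sum_sub_distrib, hrow x]
          simp
        rw [Finset.sum_congr rfl fun x _ => by rw [hin x]]
        rw [← Finset.sum_mul, mul_comm]

lemma chainDist_sum {S : Type*} [Fintype S] [DecidableEq S] (P : S → S → ℝ) (x : S)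
    (hrow : ∀ s, ∑ y : S, P s y = 1) : ∀ t, ∑ s : S, chainDist P x t s = 1
  | 0 => by simp [chainDist]
  | t + 1 => by
    simp only [chainDist]
    rw [Finset.sum_comm]
    have : ∀ s' : S, ∑ s : S, chainDist P x t s' * P s' s = chainDist P x t s' := by
      intro s'; rw [← Finset.mul_sum, hrow s', mul_one]
    rw [Finset.sum_congr rfl fun s' _ => this s']
    exact chainDist_sum P x hrow t

lemma cSel_nonneg {n : ℕ} (hn : 0 < n) : 0 ≤ cSel n := by
  apply pow_nonneg
  have : 1 / (n : ℝ) ≤ 1 := by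
    rw [div_le_one (by exact_mod_cast hn)]
    exact_mod_cast hn
  linarith

lemma cSel_le_one {n : ℕ} (hn : 0 < n) : cSel n ≤ 1 := by
  apply pow_le_one₀
  · have : 1 / (n : ℝ) ≤ 1 := by
      rw [div_le_one (by exact_mod_cast hn)]
      exact_mod_cast hn
    linarith
  · have : (0:ℝ) < 1 / n := by positivity
    linarith

lemma exp_neg_one_le_cSel {n : ℕ} (hn : 0 < n) : Real.exp (-1) ≤ cSel n := by
  rcases Nat.lt_or_ge n 2 with h2 | h2
  · interval_cases n
    · have : cSel 1 = 1 := by simp [cSel]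
      rw [this]
      exact (Real.exp_lt_one_iff.mpr (by norm_num)).le
  · obtain ⟨m, rfl⟩ : ∃ m, n = m + 1 := ⟨n - 1, by omega⟩
    have hm : 0 < m := by omega
    have hm' : (0:ℝ) < m := by exact_mod_cast hm
    have hbase : Real.exp (-(1 / (m:ℝ))) ≤ 1 - 1 / ((m:ℝ) + 1) := by
      have h1 : 1 / (m:ℝ) + 1 ≤ Real.exp (1 / m) := Real.add_one_le_exp _
      have h2' : (0:ℝ) < 1 / (m:ℝ) + 1 := by positivity
      rw [Real.exp_neg]
      rw [show (1:ℝ) - 1 / ((m:ℝ) + 1) = ((m:ℝ))/(m+1) by field_simp; ring]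
      rw [inv_le_iff_one_le_mul₀ (Real.exp_pos _)]
      calc (1:ℝ) = ((m:ℝ)/(m+1)) * ((m+1)/m) := by field_simp
        _ ≤ ((m:ℝ)/(m+1)) * Real.exp (1/m) := by
            apply mul_le_mul_of_nonneg_left _ (by positivity)
            calc ((m:ℝ)+1)/m = 1/(m:ℝ) + 1 := by field_simp; ring
              _ ≤ Real.exp (1/m) := h1
    have : cSel (m + 1) = (1 - 1/((m:ℝ)+1)) ^ m := by
      simp [cSel]
    rw [this]
    calc Real.exp (-1) = Real.exp (-(1/(m:ℝ))) ^ m := by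
          rw [← Real.exp_nat_mul]
          congr 1
          field_simp
      _ ≤ (1 - 1/((m:ℝ)+1)) ^ m := pow_le_pow_left₀ (Real.exp_nonneg _) hbase m

lemma chain_tv {S : Type*} [Fintype S] [DecidableEq S]
    (P : S → S → ℝ) (π : S → ℝ) (x z : S) (β : ℝ)
    (hP0 : ∀ a b, 0 ≤ P a b) (hrow : ∀ a, ∑ b : S, P a b = 1)
    (hβ : ∀ a, β ≤ P a z) (hβ1 : β ≤ 1)
    (hstat : ∀ b, ∑ a : S, π a * P a b = π b)
    (hπ0 : ∀ a, 0 ≤ π a) (hπ1 : ∑ a : S, π a = 1) :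
    ∀ t, ∑ s : S, |chainDist P x t s - π s| ≤ 2 * (1 - β) ^ t
  | 0 => by
    simp only [chainDist, pow_zero, mul_one]
    calc ∑ s : S, |(if s = x then (1:ℝ) else 0) - π s|
        ≤ ∑ s : S, ((if s = x then (1:ℝ) else 0) + π s) := by
          refine Finset.sum_le_sum fun s _ => ?_
          have h1 : (0:ℝ) ≤ if s = x then (1:ℝ) else 0 := by positivity
          calc |(if s = x then (1:ℝ) else 0) - π s|
              ≤ |if s = x then (1:ℝ) else 0| + |π s| := abs_sub _ _
            _ = _ := by rw [abs_of_nonneg h1, abs_of_nonneg (hπ0 s)]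
      _ = 2 := by rw [Finset.sum_add_distrib, hπ1]; simp; norm_num
  | t + 1 => by
    have ih := chain_tv P π x z β hP0 hrow hβ hβ1 hstat hπ0 hπ1 t
    have hsum := chainDist_sum P x hrow t
    have step := contract_step P π (chainDist P x t) z β hP0 hrow hβ (by rw [hsum, hπ1])
    calc ∑ s : S, |chainDist P x (t+1) s - π s|
        = ∑ s : S, |∑ s' : S, chainDist P x t s' * P s' s - ∑ s' : S, π s' * P s' s| := by
          simp only [chainDist]
          exact Finset.sum_congr rfl fun s _ => by rw [hstat s]
      _ ≤ (1 - β) * ∑ s : S, |chainDist P x t s - π s| := step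
      _ ≤ (1 - β) * (2 * (1-β)^t) := mul_le_mul_of_nonneg_left ih (by linarith)
      _ = 2 * (1-β)^(t+1) := by ring

set_option maxHeartbeats 1000000 in
/-- Theorem 8 of the paper: on the complete interference graph
with `n ≥ 1` links, for any `ρ ∈ (0,1)` and any `ν ∈ ρΛ` (i.e. `ν ≥ 0` and
`Σ_j ν_j ≤ ρ`), there exist fugacities `λ > 0` whose stationary service rates
equal `ν_i + (1-ρ)/(2n) > ν_i`, with `λ_max ≤ (1+ρ)/(1-ρ)`, and the resulting
chain satisfies `T_mix ≤ 2n/(c_min(1-ρ)) = O(n)` with `c_min = 0.2`. -/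
theorem complete_graph_linear_mixing
    (n : ℕ) (hn : 0 < n)
    (ρ : ℝ) (hρ0 : 0 < ρ) (hρ1 : ρ < 1)
    (ν : Fin n → ℝ) (hν0 : ∀ i, 0 ≤ ν i) (hνsum : ∑ j : Fin n, ν j ≤ ρ) :
    ∃ lam : Fin n → ℝ, (∀ i, 0 < lam i) ∧
      (∀ i, lam i / (1 + ∑ j : Fin n, lam j) = ν i + (1 - ρ) / (2 * n)) ∧
      (∀ i, ν i < lam i / (1 + ∑ j : Fin n, lam j)) ∧
      (∀ i, lam i ≤ (1 + ρ) / (1 - ρ)) ∧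
      ((mixTime (completeP n lam) (completePi n lam) Finset.univ : ℝ) ≤
        2 * n / (0.2 * (1 - ρ))) := by
  have hn' : (0:ℝ) < n := by exact_mod_cast hn
  have hn1 : (1:ℝ) ≤ n := by exact_mod_cast hn
  have hρ' : (0:ℝ) < 1 - ρ := by linarith
  have hεpos : 0 < (1 - ρ) / (2 * n) := by positivity
  set ε := (1 - ρ) / (2 * n) with hε
  set s : Fin n → ℝ := fun i => ν i + ε with hs
  have hs0 : ∀ i, 0 < s i := fun i => by have := hν0 i; simp only [hs]; positivity
  have hnε : (n:ℝ) * ε = (1 - ρ) / 2 := by rw [hε]; field_simp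
  have hSsum : ∑ j : Fin n, s j ≤ (1 + ρ) / 2 := by
    have h1 : ∑ j : Fin n, s j = (∑ j : Fin n, ν j) + (n:ℝ) * ε := by
      simp [hs, Finset.sum_add_distrib, mul_comm]
    rw [h1, hnε]; linarith
  have h1S : 0 < 1 - ∑ j : Fin n, s j := by linarith
  have h1S' : (1 - ρ)/2 ≤ 1 - ∑ j : Fin n, s j := by linarith
  set lam : Fin n → ℝ := fun i => s i / (1 - ∑ j : Fin n, s j) with hlam
  have hlam0 : ∀ i, 0 < lam i := fun i => div_pos (hs0 i) h1S
  have hSlam : ∑ j : Fin n, lam j = (∑ j : Fin n, s j) / (1 - ∑ j : Fin n, s j) := by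
    rw [hlam, ← Finset.sum_div]
  have hZeq : 1 + ∑ j : Fin n, lam j = 1 / (1 - ∑ j : Fin n, s j) := by
    rw [hSlam]; field_simp; ring
  have hrate : ∀ i, lam i / (1 + ∑ j : Fin n, lam j) = s i := by
    intro i
    rw [hZeq, hlam]
    field_simp
  have hlam_le : ∀ i, lam i ≤ (1 + ρ) / (1 - ρ) := by
    intro i
    have hsle : s i ≤ ∑ j : Fin n, s j :=
      Finset.single_le_sum (fun j _ => (hs0 j).le) (Finset.mem_univ i)
    have hsle2 : s i ≤ (1 + ρ) / 2 := le_trans hsle hSsum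
    have h1 : lam i ≤ ((1 + ρ)/2) / ((1 - ρ)/2) := by
      show s i / (1 - ∑ j : Fin n, s j) ≤ ((1 + ρ)/2) / ((1 - ρ)/2)
      exact div_le_div₀ (by linarith) hsle2 (by linarith) h1S'
    have h2 : ((1 + ρ)/2) / ((1 - ρ)/2) = (1 + ρ) / (1 - ρ) := by
      rw [div_div_div_cancel_right₀]
      exact (by norm_num : (2:ℝ) ≠ 0)
    linarith
  have hlam1pos : ∀ i, (0:ℝ) < 1 + lam i := fun i => by linarith [hlam0 i]
  have hinv_lb : ∀ i, (1 - ρ)/2 ≤ 1 / (1 + lam i) := by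
    intro i
    rw [div_le_div_iff₀ (by norm_num) (hlam1pos i)]
    have h2 : (1 - ρ) * lam i ≤ 1 + ρ := by
      have := hlam_le i
      calc (1 - ρ) * lam i ≤ (1 - ρ) * ((1 + ρ)/(1 - ρ)) :=
            mul_le_mul_of_nonneg_left (hlam_le i) hρ'.le
        _ = 1 + ρ := by field_simp
    nlinarith
  have hinv_ub : ∀ i, 1 / (1 + lam i) ≤ 1 := by
    intro i
    rw [div_le_one (hlam1pos i)]
    linarith [hlam0 i]
  have hinv_nn : ∀ i, (0:ℝ) ≤ 1 / (1 + lam i) := fun i =>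
    div_nonneg zero_le_one (hlam1pos i).le
  -- abbreviations
  have hc0 : 0 ≤ cSel n := cSel_nonneg hn
  have hc1 : cSel n ≤ 1 := cSel_le_one hn
  have hce : Real.exp (-1) ≤ cSel n := exp_neg_one_le_cSel hn
  have hcn0 : 0 ≤ cSel n / n := by positivity
  have hcn1 : cSel n / n ≤ 1 := by
    rw [div_le_one hn']; linarith
  have hZpos : (0:ℝ) < 1 + ∑ j : Fin n, lam j := by
    have : 0 ≤ ∑ j : Fin n, lam j := Finset.sum_nonneg fun j _ => (hlam0 j).le
    linarith
  have hZne : (1 + ∑ j : Fin n, lam j) ≠ 0 := hZpos.ne'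
  -- sum-splitting identity
  have hone : ∀ i, 1 / (1 + lam i) + lam i / (1 + lam i) = 1 := by
    intro i
    rw [← add_div, div_eq_one_iff_eq (hlam1pos i).ne']
  have hsplit : (∑ i : Fin n, 1 / (1 + lam i)) + (∑ i : Fin n, lam i / (1 + lam i)) = n := by
    rw [← Finset.sum_add_distrib, Finset.sum_congr rfl fun i _ => hone i]
    simp
  -- transition matrix facts
  have hP0 : ∀ x y, 0 ≤ completeP n lam x y := by
    intro x y
    match x, y with
    | none, none =>
      show 0 ≤ 1 - cSel n + (cSel n / n) * ∑ i : Fin n, 1 / (1 + lam i)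
      have : 0 ≤ ∑ i : Fin n, 1 / (1 + lam i) := Finset.sum_nonneg fun i _ => hinv_nn i
      nlinarith
    | none, some i =>
      show 0 ≤ (cSel n / n) * (lam i / (1 + lam i))
      have := hlam0 i; have := hlam1pos i; positivity
    | some i, none =>
      show 0 ≤ (cSel n / n) * (1 / (1 + lam i))
      have := hlam1pos i; positivity
    | some i, some j =>
      show 0 ≤ if i = j then 1 - (cSel n / n) * (1 / (1 + lam i)) else 0
      by_cases h : i = j
      · rw [if_pos h]
        nlinarith [hinv_ub i, hinv_nn i]
      · rw [if_neg h]
  have hrowP : ∀ x, ∑ y : Option (Fin n), completeP n lam x y = 1 := by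
    intro x
    rw [Fintype.sum_option]
    match x with
    | none =>
      show (1 - cSel n + (cSel n / n) * ∑ i : Fin n, 1 / (1 + lam i))
          + ∑ i : Fin n, (cSel n / n) * (lam i / (1 + lam i)) = 1
      rw [← Finset.mul_sum]
      have hkey : cSel n / n * ((∑ i : Fin n, 1 / (1 + lam i))
          + (∑ i : Fin n, lam i / (1 + lam i))) = cSel n := by
        rw [hsplit]; field_simp
      linarith [hkey, mul_add (cSel n / n) (∑ i : Fin n, 1 / (1 + lam i)) (∑ i : Fin n, lam i / (1 + lam i))]
    | some i =>
      show (cSel n / n) * (1 / (1 + lam i))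
          + ∑ j : Fin n, (if i = j then 1 - (cSel n / n) * (1 / (1 + lam i)) else 0) = 1
      rw [Finset.sum_ite_eq Finset.univ i fun _ => 1 - (cSel n / n) * (1 / (1 + lam i))]
      simp
  have hstatP : ∀ y, ∑ x : Option (Fin n),
      completePi n lam x * completeP n lam x y = completePi n lam y := by
    intro y
    rw [Fintype.sum_option]
    match y with
    | none =>
      show completePi n lam none * (1 - cSel n + (cSel n / n) * ∑ i : Fin n, 1 / (1 + lam i))
          + ∑ i : Fin n, completePi n lam (some i) * ((cSel n / n) * (1 / (1 + lam i)))
          = completePi n lam none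
      simp only [completePi]
      have h1 : ∀ i : Fin n, lam i / (1 + ∑ j : Fin n, lam j) * (cSel n / n * (1 / (1 + lam i)))
          = cSel n / n * (1 / (1 + ∑ j : Fin n, lam j)) * (lam i / (1 + lam i)) := by
        intro i; ring
      rw [Finset.sum_congr rfl fun i _ => h1 i, ← Finset.mul_sum]
      have hkey : cSel n / n * ((∑ i : Fin n, 1 / (1 + lam i))
          + (∑ i : Fin n, lam i / (1 + lam i))) = cSel n := by
        rw [hsplit]; field_simp
      linear_combination (1 / (1 + ∑ j : Fin n, lam j)) * hkey
    | some j =>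
      show completePi n lam none * ((cSel n / n) * (lam j / (1 + lam j)))
          + ∑ i : Fin n, completePi n lam (some i)
            * (if i = j then 1 - (cSel n / n) * (1 / (1 + lam i)) else 0)
          = completePi n lam (some j)
      simp only [completePi]
      have h1 : ∀ i : Fin n, lam i / (1 + ∑ j : Fin n, lam j)
            * (if i = j then 1 - (cSel n / n) * (1 / (1 + lam i)) else 0)
          = if i = j then lam i / (1 + ∑ j : Fin n, lam j)
              * (1 - (cSel n / n) * (1 / (1 + lam i))) else 0 := by
        intro i; by_cases h : i = j <;> simp [h]
      rw [Finset.sum_congr rfl fun i _ => h1 i,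
        Finset.sum_ite_eq' Finset.univ j
          (fun i => lam i / (1 + ∑ j : Fin n, lam j) * (1 - (cSel n / n) * (1 / (1 + lam i))))]
      simp only [Finset.mem_univ, if_true]
      ring
  -- stationary distribution facts
  have hπ0 : ∀ x, 0 ≤ completePi n lam x := by
    intro x
    match x with
    | none => show (0:ℝ) ≤ 1 / (1 + ∑ j : Fin n, lam j); positivity
    | some i =>
      show (0:ℝ) ≤ lam i / (1 + ∑ j : Fin n, lam j)
      exact div_nonneg (hlam0 i).le hZpos.le
  have hπ1 : ∑ x : Option (Fin n), completePi n lam x = 1 := by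
    rw [Fintype.sum_option]
    show 1 / (1 + ∑ j : Fin n, lam j) + ∑ i : Fin n, lam i / (1 + ∑ j : Fin n, lam j) = 1
    have hcomb : ∑ i : Fin n, lam i / (1 + ∑ j : Fin n, lam j)
        = (∑ i : Fin n, lam i) / (1 + ∑ j : Fin n, lam j) := (Finset.sum_div _ _ _).symm
    rw [hcomb, ← add_div, div_eq_one_iff_eq hZne]
  -- the Doeblin minorization constant
  set β : ℝ := (cSel n / n) * ((1 - ρ)/2) with hβdef
  have hβ0 : 0 < β := by
    have hcpos : 0 < cSel n := lt_of_lt_of_le (Real.exp_pos _) hce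
    rw [hβdef]; positivity
  have hβ1 : β ≤ 1 := by
    rw [hβdef]
    nlinarith [hcn0, hcn1]
  have hβle : ∀ x, β ≤ completeP n lam x none := by
    intro x
    match x with
    | none =>
      show β ≤ 1 - cSel n + (cSel n / n) * ∑ i : Fin n, 1 / (1 + lam i)
      have hsum_lb : (n:ℝ) * ((1 - ρ)/2) ≤ ∑ i : Fin n, 1 / (1 + lam i) := by
        calc (n:ℝ) * ((1 - ρ)/2) = ∑ _i : Fin n, (1 - ρ)/2 := by
              rw [Finset.sum_const]; simp [mul_comm]
          _ ≤ ∑ i : Fin n, 1 / (1 + lam i) := Finset.sum_le_sum fun i _ => hinv_lb i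
      have h1 : (cSel n / n) * ((n:ℝ) * ((1 - ρ)/2)) = cSel n * ((1 - ρ)/2) := by
        field_simp
      have h2 : (cSel n / n) * ((n:ℝ) * ((1 - ρ)/2)) ≤ (cSel n / n) * ∑ i : Fin n, 1 / (1 + lam i) :=
        mul_le_mul_of_nonneg_left hsum_lb hcn0
      have h3 : β ≤ cSel n * ((1 - ρ)/2) := by
        rw [hβdef]
        apply mul_le_mul_of_nonneg_right _ (by linarith)
        exact div_le_self hc0 hn1
      linarith
    | some i =>
      show β ≤ (cSel n / n) * (1 / (1 + lam i))
      rw [hβdef]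
      exact mul_le_mul_of_nonneg_left (hinv_lb i) hcn0
  -- numerics
  set B : ℝ := 2 * n / (0.2 * (1 - ρ)) with hBdef
  have hB0 : 0 ≤ B := by rw [hBdef]; positivity
  set T : ℕ := ⌊B⌋₊ with hTdef
  have hβB : β * B = 5 * cSel n := by
    rw [hβdef, hBdef]
    field_simp
    ring
  have hβc : β ≤ cSel n := by
    rw [hβdef]
    calc (cSel n / n) * ((1 - ρ)/2) ≤ (cSel n / n) * 1 :=
          mul_le_mul_of_nonneg_left (by linarith) hcn0
      _ ≤ cSel n := by rw [mul_one]; exact div_le_self hc0 hn1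
  have h4e : (1:ℝ) ≤ 4 * Real.exp (-1) := by
    have hmul : Real.exp (-1) * Real.exp 1 = 1 := by
      rw [← Real.exp_add]; norm_num
    nlinarith [hmul, Real.exp_one_lt_d9, Real.exp_pos 1, Real.exp_pos (-1)]
  have hT1 : B - 1 ≤ (T:ℝ) := by
    have := Nat.lt_floor_add_one B
    rw [hTdef]; linarith
  have hβT : 1 ≤ β * T := by
    have h1 : β * (B - 1) ≤ β * T := mul_le_mul_of_nonneg_left hT1 hβ0.le
    have h2 : β * (B - 1) = 5 * cSel n - β := by rw [mul_sub, hβB]; ring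
    nlinarith [hce]
  -- the TV bound at time T
  have hTV : ∀ x : Option (Fin n),
      tvDist (chainDist (completeP n lam) x T) (completePi n lam) ≤ 1 / Real.exp 1 := by
    intro x
    have hbound := chain_tv (completeP n lam) (completePi n lam) x none β
      hP0 hrowP hβle hβ1 hstatP hπ0 hπ1 T
    have hexp : (1 - β) ^ T ≤ Real.exp (-1) := by
      calc (1 - β) ^ T ≤ Real.exp (-β) ^ T := by
            apply pow_le_pow_left₀ (by linarith)
            linarith [Real.add_one_le_exp (-β)]
        _ = Real.exp (-(β * T)) := by
            rw [← Real.exp_nat_mul]; ring_nf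
        _ ≤ Real.exp (-1) := Real.exp_le_exp.mpr (by linarith)
    rw [tvDist]
    have hdiv : (1:ℝ)/Real.exp 1 = Real.exp (-1) := by rw [Real.exp_neg, one_div]
    rw [hdiv]
    linarith [hbound, hexp]
  -- assemble
  have hmixle : mixTime (completeP n lam) (completePi n lam) Finset.univ ≤ T :=
    Finset.sup_le fun x _ => Nat.sInf_le (hTV x)
  refine ⟨lam, hlam0, ?_, ?_, hlam_le, ?_⟩
  · intro i; rw [hrate i]
  · intro i; rw [hrate i]; simp only [hs]; linarith [hεpos]
  · calc ((mixTime (completeP n lam) (completePi n lam) Finset.univ : ℕ) : ℝ)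
        ≤ (T : ℝ) := by exact_mod_cast hmixle
      _ ≤ B := Nat.floor_le hB0
      _ = 2 * n / (0.2 * (1 - ρ)) := by rw [hBdef]
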